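/- Let A and B be m × m real positive definite matrices, and suppose A is diagonal with diagonal entries a₁, …, a_m. Denote the diagonal entries of B by b₁, …, b_m (B is not necessarily diagonal). Then tr(B A^{−1}) − ln det(B A^{−1}) ≥ Σ_{i=1}^m b_i/a_i − Σ_{i=1}^m ln( b_i/a_i ). -/

import Mathlib

open Matrix Real


lemma posdef_diag_conj {m : ℕ} {B : Matrix (Fin m) (Fin m) ℝ} (hB : B.PosDef)
    {d : Fin m → ℝ} (hd : ∀ i, d i ≠ 0) :
    (Matrix.diagonal d * B * Matrix.diagonal d).PosDef := by
  refine Matrix.PosDef.of_dotProduct_mulVec_pos ?_ ?_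
  · have hBh := hB.1
    have hd2 : (Matrix.diagonal d).IsHermitian :=
      Matrix.isHermitian_diagonal d
    simp only [Matrix.IsHermitian, conjTranspose_mul, hBh.eq, hd2.eq, Matrix.mul_assoc]
  · intro x hx
    have hDx : Matrix.diagonal d *ᵥ x ≠ 0 := by
      intro h
      apply hx
      funext i
      have := congrFun h i
      simp [Matrix.mulVec_diagonal] at this
      exact this.resolve_left (hd i)
    have key := hB.dotProduct_mulVec_pos hDx
    have : star x ⬝ᵥ (Matrix.diagonal d * B * Matrix.diagonal d) *ᵥ x
        = star (Matrix.diagonal d *ᵥ x) ⬝ᵥ B *ᵥ (Matrix.diagonal d *ᵥ x) := by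
      rw [← Matrix.mulVec_mulVec, ← Matrix.mulVec_mulVec, Matrix.dotProduct_mulVec]
      congr 1
      funext i
      simp [Matrix.vecMul_diagonal, Matrix.mulVec_diagonal, mul_comm]
    rw [this]
    exact key

lemma trace_eq_sum_eigs {m : ℕ} {C : Matrix (Fin m) (Fin m) ℝ} (hC : C.IsHermitian) :
    C.trace = ∑ i, hC.eigenvalues i := by
  conv_lhs => rw [hC.spectral_theorem]
  rw [Unitary.conjStarAlgAut_apply]
  rw [Matrix.trace_mul_cycle]
  have : (star (hC.eigenvectorUnitary : Matrix (Fin m) (Fin m) ℝ)) *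
      (hC.eigenvectorUnitary : Matrix (Fin m) (Fin m) ℝ) = 1 :=
    Unitary.coe_star_mul_self _
  rw [this, Matrix.one_mul, Matrix.trace_diagonal]
  simp

lemma hadamard_ineq {m : ℕ} {B : Matrix (Fin m) (Fin m) ℝ} (hB : B.PosDef) :
    B.det ≤ ∏ i, B i i := by
  have hdiag : ∀ i, 0 < B i i := by
    intro i
    have := hB.dotProduct_mulVec_pos (x := Pi.single i 1) (by simp [Function.ne_iff])
    simpa using this
  set d : Fin m → ℝ := fun i => (Real.sqrt (B i i))⁻¹ with hd_def
  have hd : ∀ i, 0 < d i := fun i => inv_pos.mpr (Real.sqrt_pos.mpr (hdiag i))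
  set C := Matrix.diagonal d * B * Matrix.diagonal d with hC_def
  have hC : C.PosDef := posdef_diag_conj hB (fun i => (hd i).ne')
  have hCdiag : ∀ i, C i i = 1 := by
    intro i
    have hs : Real.sqrt (B i i) * Real.sqrt (B i i) = B i i :=
      Real.mul_self_sqrt (hdiag i).le
    have hs0 : Real.sqrt (B i i) ≠ 0 := Real.sqrt_ne_zero'.mpr (hdiag i)
    simp only [hC_def, Matrix.mul_diagonal, Matrix.diagonal_mul, hd_def]
    field_simp
    rw [sq, hs]
  -- trace C = m
  have htr : C.trace = (m : ℝ) := by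
    rw [Matrix.trace]
    simp [Matrix.diag, hCdiag]
  -- det C ≤ 1 via eigenvalues
  have hev : ∀ i, 0 < hC.1.eigenvalues i := hC.eigenvalues_pos
  have hsum : ∑ i, hC.1.eigenvalues i = (m : ℝ) := by
    rw [← trace_eq_sum_eigs hC.1, htr]
  have hlog : ∑ i, Real.log (hC.1.eigenvalues i) ≤ 0 := by
    calc ∑ i, Real.log (hC.1.eigenvalues i)
        ≤ ∑ i, (hC.1.eigenvalues i - 1) :=
          Finset.sum_le_sum fun i _ => Real.log_le_sub_one_of_pos (hev i)
      _ = 0 := by rw [Finset.sum_sub_distrib, hsum]; simp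
  have hdetC : C.det ≤ 1 := by
    have hdet : C.det = ∏ i, hC.1.eigenvalues i := by
      rw [hC.1.det_eq_prod_eigenvalues]; norm_num
    rw [hdet, ← Real.exp_log (Finset.prod_pos (fun i _ => hev i)),
      Real.log_prod (fun i _ => (hev i).ne')]
    calc Real.exp (∑ i, Real.log (hC.1.eigenvalues i)) ≤ Real.exp 0 :=
      Real.exp_le_exp.mpr hlog
      _ = 1 := Real.exp_zero
  -- relate det C to det B
  have hdC : C.det = B.det * (∏ i, B i i)⁻¹ := by
    rw [hC_def, Matrix.det_mul, Matrix.det_mul, Matrix.det_diagonal]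
    rw [hd_def]
    rw [show ((∏ i, (Real.sqrt (B i i))⁻¹) * B.det * ∏ i, (Real.sqrt (B i i))⁻¹)
        = B.det * ((∏ i, (Real.sqrt (B i i))⁻¹) * ∏ i, (Real.sqrt (B i i))⁻¹) by ring]
    congr 1
    rw [← Finset.prod_mul_distrib, ← Finset.prod_inv_distrib]
    congr 1
    funext i
    rw [← mul_inv, Real.mul_self_sqrt (hdiag i).le]
  have hprod : 0 < ∏ i, B i i := Finset.prod_pos fun i _ => hdiag i
  rw [hdC] at hdetC
  calc B.det = B.det * (∏ i, B i i)⁻¹ * ∏ i, B i i := by field_simp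
    _ ≤ 1 * ∏ i, B i i := by
        exact mul_le_mul_of_nonneg_right hdetC hprod.le
    _ = ∏ i, B i i := one_mul _

/-- Let `A = diagonal a` and `B` be `m × m` real positive definite matrices, with `A`
diagonal (diagonal entries `a i`) and `B` not necessarily diagonal (diagonal entries
`B i i`).  Then `tr(B A⁻¹) − ln det(B A⁻¹) ≥ ∑ i, (B i i)/(a i) − ∑ i, ln((B i i)/(a i))`. -/
theorem stmt9 (m : ℕ) (a : Fin m → ℝ) (B : Matrix (Fin m) (Fin m) ℝ)
    (hA : (Matrix.diagonal a).PosDef) (hB : B.PosDef) :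
    (B * (Matrix.diagonal a)⁻¹).trace - Real.log (B * (Matrix.diagonal a)⁻¹).det ≥
      (∑ i, B i i / a i) - ∑ i, Real.log (B i i / a i) := by
  have ha : ∀ i, 0 < a i := Matrix.posDef_diagonal_iff.mp hA
  have hbd : ∀ i, 0 < B i i := fun i => by
    have := hB.dotProduct_mulVec_pos (x := Pi.single i 1) (by simp [Function.ne_iff])
    simpa using this
  have hinv : (Matrix.diagonal a)⁻¹ = Matrix.diagonal (fun i => (a i)⁻¹) := by
    apply Matrix.inv_eq_right_inv
    rw [Matrix.diagonal_mul_diagonal]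
    convert Matrix.diagonal_one with i
    exact mul_inv_cancel₀ (ha i).ne'
  have htr : (B * (Matrix.diagonal a)⁻¹).trace = ∑ i, B i i / a i := by
    rw [hinv, Matrix.trace]
    simp [Matrix.diag, Matrix.mul_diagonal, div_eq_mul_inv]
  have hdet : (B * (Matrix.diagonal a)⁻¹).det = B.det * (∏ i, a i)⁻¹ := by
    rw [hinv, Matrix.det_mul, Matrix.det_diagonal, ← Finset.prod_inv_distrib]
  have hdetB : 0 < B.det := hB.det_pos
  have hprodb : 0 < ∏ i, B i i := Finset.prod_pos fun i _ => hbd i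
  have hproda : 0 < ∏ i, a i := Finset.prod_pos fun i _ => ha i
  have hlogdet : Real.log (B * (Matrix.diagonal a)⁻¹).det
      = Real.log B.det - Real.log (∏ i, a i) := by
    rw [hdet, Real.log_mul hdetB.ne' (inv_ne_zero hproda.ne'), Real.log_inv]
    ring
  have hlogsum : ∑ i, Real.log (B i i / a i)
      = Real.log (∏ i, B i i) - Real.log (∏ i, a i) := by
    rw [Real.log_prod (fun i _ => (hbd i).ne'),
      Real.log_prod (fun i _ => (ha i).ne'), ← Finset.sum_sub_distrib]
    exact Finset.sum_congr rfl fun i _ => Real.log_div (hbd i).ne' (ha i).ne'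
  have hH : Real.log B.det ≤ Real.log (∏ i, B i i) :=
    Real.log_le_log hdetB (hadamard_ineq hB)
  rw [ge_iff_le, htr, hlogdet, hlogsum]
  linarith
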